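/- Let N = M_p where p = ⟨(0, h_α) : α < ω₁⟩ with each h_α = h given by h(2n+l) = l. Then N has no automorphism mapping (0, x₀) to (0, x₁). -/

import Mathlib

noncomputable section
open Set

/-- `G` is the vector space over `ℤ/2ℤ` with basis indexed by `ℕ`. -/
abbrev G : Type := ℕ →₀ ZMod 2

/-- The basis element `xₙ`. -/
def xg (n : ℕ) : G := Finsupp.single n 1

/-- `G⁰ₙ`: the subspace generated by the `x_k` for `k ≠ n`. -/
def G0 (n : ℕ) : Set G :=
  (Submodule.span (ZMod 2) {y : G | ∃ k : ℕ, k ≠ n ∧ y = xg k} : Submodule (ZMod 2) G)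

/-- `G¹ₙ = xₙ + G⁰ₙ`, the nontrivial coset. -/
def G1 (n : ℕ) : Set G := (fun z => xg n + z) '' G0 n

/-- The family `𝒢 = {Gˡₙ : n < ω, l ∈ {0,1}}`. -/
def Gfam : Set (Set G) := {S | ∃ n : ℕ, S = G0 n ∨ S = G1 n}

/-- The first uncountable ordinal. -/
def omega1 : Ordinal := (Cardinal.aleph 1).ord

/-- The universe of the structure `M`: elements of the parts `A_α = {α} × G`
and of the parts `B_α ⊆ {η : α → 𝒢}` (sequences are padded by `∅` beyond `α`). -/
inductive MU : Type 1 where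
  | a : Ordinal → G → MU
  | b : Ordinal → (Ordinal → Set G) → MU

/-- The condition for `η` (as a total function, padded by `∅`) to code a member of `B_α`:
its values below `α` are in `𝒢` and for some `n` it equals `G⁰ₙ` with finitely many
exceptions. -/
def okB (α : Ordinal) (η : Ordinal → Set G) : Prop :=
  (∀ β, β < α → η β ∈ Gfam) ∧ (∀ β, ¬ β < α → η β = ∅) ∧
    ∃ n : ℕ, {β : Ordinal | β < α ∧ η β ≠ G0 n}.Finite

/-- The universe of `M_{<γ}`, i.e. `∪ {A_β ∪ B_β : β < γ}`. -/
def MUuniv (γ : Ordinal) : Set MU :=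
  {u | match u with
       | .a α _ => α < γ
       | .b α η => α < γ ∧ okB α η}

/-- `u` belongs to the `A`-part (the predicate `P₁`; `P₂` is its negation). -/
def isA : MU → Prop
  | .a _ _ => True
  | .b _ _ => False

/-- The index `α` of the part `A_α` or `B_α` containing the element. -/
def idx : MU → Ordinal
  | .a α _ => α
  | .b α _ => α

/-- The relation `E₁`. -/
def E1 (u v : MU) : Prop := isA u ∧ isA v ∧ idx u ≤ idx v

/-- The relation `E₂`. -/
def E2 (u v : MU) : Prop := ¬ isA u ∧ ¬ isA v ∧ idx u ≤ idx v

/-- The unary function `F_y`: translation by `y` on each `A_α`, identity on each `B_α`. -/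
def Fy (y : G) : MU → MU
  | .a α g => .a α (g + y)
  | .b α η => .b α η

/-- The relation `R = {(η, (α,x)) : α < lh η, x ∈ η(α)}`. -/
def Rmem (u v : MU) : Prop :=
  ∃ (β : Ordinal) (η : Ordinal → Set G) (α : Ordinal) (g : G),
    u = .b β η ∧ v = .a α g ∧ α < β ∧ g ∈ η α

/-- `f` is an automorphism of the restriction of `M` to the set `S`. -/
structure IsAut (S : Set MU) (f : MU → MU) : Prop where
  bij : Set.BijOn f S S
  p1 : ∀ u ∈ S, (isA (f u) ↔ isA u)
  e1 : ∀ u ∈ S, ∀ v ∈ S, (E1 (f u) (f v) ↔ E1 u v)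
  e2 : ∀ u ∈ S, ∀ v ∈ S, (E2 (f u) (f v) ↔ E2 u v)
  fy : ∀ (y : G), ∀ u ∈ S, f (Fy y u) = Fy y (f u)
  r : ∀ u ∈ S, ∀ v ∈ S, (Rmem (f u) (f v) ↔ Rmem u v)

/-- The map `f_ν`: translation by `ν(α)` on `A_α`, coset translation on the `B`-parts. -/
def fnu (ν : Ordinal → G) : MU → MU
  | .a α g => .a α (g + ν α)
  | .b α η => .b α (fun β => (fun z => ν β + z) '' η β)

/-- The support-finiteness condition on `ν : γ → G`:
for every `β < γ` and every `n`, `{α < β : n ∈ supp ν(α)}` is finite. -/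
def SuppFin (γ : Ordinal) (ν : Ordinal → G) : Prop :=
  ∀ β < γ, ∀ n : ℕ, {α : Ordinal | α < β ∧ n ∈ (ν α).support}.Finite

/-- The relation `R₁` of the expansion `M_p`, for the parameter sequence
`p = ⟨(β_α, g_α) : α < ω₁⟩`:
`R₁ = {((β_α, y₂), (α, y₁)) : α < ω₁, g_α(y₁) = y₂}`. -/
def R1 (βf : Ordinal → Ordinal) (gf : Ordinal → (G →+ G)) (u v : MU) : Prop :=
  ∃ (α : Ordinal) (y₁ y₂ : G),
    α < omega1 ∧ v = .a α y₁ ∧ u = .a (βf α) y₂ ∧ gf α y₁ = y₂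

/-- `f` is an automorphism of the restriction of the expansion `M_p` to `S`. -/
structure IsAutP (βf : Ordinal → Ordinal) (gf : Ordinal → (G →+ G))
    (S : Set MU) (f : MU → MU) extends IsAut S f : Prop where
  r1 : ∀ u ∈ S, ∀ v ∈ S, (R1 βf gf (f u) (f v) ↔ R1 βf gf u v)

namespace Stmt15Aux

lemma zmod2_add_self (c : ZMod 2) : c + c = 0 := by revert c; decide

lemma add_self (g : G) : g + g = 0 := by
  ext i
  rw [Finsupp.add_apply, Finsupp.coe_zero, Pi.zero_apply]
  exact zmod2_add_self _

lemma mem_G0 (n : ℕ) (y : G) : y ∈ G0 n ↔ y n = 0 := by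
  constructor
  · intro hy
    have hle : Submodule.span (ZMod 2) {y : G | ∃ k : ℕ, k ≠ n ∧ y = xg k} ≤
        LinearMap.ker (Finsupp.lapply n : G →ₗ[ZMod 2] ZMod 2) := by
      rw [Submodule.span_le]
      rintro z ⟨k, hk, rfl⟩
      simp [LinearMap.mem_ker, xg, Finsupp.single_eq_of_ne' hk]
    simpa using hle hy
  · intro hy
    show y ∈ Submodule.span (ZMod 2) {y : G | ∃ k : ℕ, k ≠ n ∧ y = xg k}
    have hrep : y = ∑ k ∈ y.support, Finsupp.single k (y k) := by
      conv_lhs => rw [← Finsupp.sum_single y]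
      rfl
    rw [hrep]
    refine Submodule.sum_mem _ fun k hk => ?_
    have hkn : k ≠ n := by
      rintro rfl; exact (Finsupp.mem_support_iff.mp hk) hy
    have hsingle : Finsupp.single k (y k) = (y k) • xg k := by
      rw [xg, Finsupp.smul_single, smul_eq_mul, mul_one]
    rw [hsingle]
    exact Submodule.smul_mem _ _ (Submodule.subset_span ⟨k, hkn, rfl⟩)

lemma mem_G1 (n : ℕ) (y : G) : y ∈ G1 n ↔ y n = 1 := by
  constructor
  · rintro ⟨z, hz, rfl⟩
    rw [Finsupp.add_apply, (mem_G0 n z).mp hz, xg, Finsupp.single_eq_same, add_zero]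
  · intro hy
    refine ⟨xg n + y, ?_, ?_⟩
    · rw [mem_G0, Finsupp.add_apply, hy, xg, Finsupp.single_eq_same]
      decide
    · show xg n + (xg n + y) = y
      rw [← add_assoc, add_self, zero_add]

end Stmt15Aux

/-- Let `N = M_p` where `p = ⟨(0, h_α) : α < ω₁⟩` with each
`h_α = h` given by `h(2n+l) = l`, inducing the homomorphism `ĥ = H` on `G`.
Then `N` has no automorphism mapping `(0, x₀)` to `(0, x₁)`. -/
theorem stmt15 (h : ℕ → ℕ) (hh : ∀ n l : ℕ, l < 2 → h (2 * n + l) = l)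
    (H : G →+ G) (hH : ∀ u : Finset ℕ, H (∑ n ∈ u, xg n) = ∑ n ∈ u, xg (h n)) :
    ¬ ∃ f : MU → MU, IsAutP (fun _ => 0) (fun _ => H) (MUuniv omega1) f ∧
      f (.a 0 (xg 0)) = .a 0 (xg 1) := by
  rintro ⟨f, hf, hfx⟩
  classical
  have haS : ∀ (α : Ordinal) (g : G), α < omega1 → MU.a α g ∈ MUuniv omega1 :=
    fun α g hα => hα
  have hzero : (0 : Ordinal) < omega1 := by
    rw [omega1, Cardinal.lt_ord]
    simpa using Cardinal.aleph_pos 1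
  have hisA : ∀ α : Ordinal, α < omega1 → isA (f (MU.a α 0)) :=
    fun α hα => (hf.p1 _ (haS α 0 hα)).mpr trivial
  have hform : ∀ α : Ordinal, α < omega1 → ∃ β z, f (MU.a α 0) = MU.a β z := by
    intro α hα
    have h1 := hisA α hα
    cases hfa : f (MU.a α 0) with
    | a β g => exact ⟨β, g, rfl⟩
    | b β ηb => rw [hfa] at h1; exact absurd h1 (by simp [isA])
  choose! π Z hfa0 using hform
  have hfA : ∀ α : Ordinal, α < omega1 → ∀ g : G,
      f (MU.a α g) = MU.a (π α) (Z α + g) := by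
    intro α hα g
    have hcom := hf.fy g (MU.a α 0) (haS α 0 hα)
    rw [hfa0 α hα] at hcom
    simpa [Fy, zero_add] using hcom
  have hπlt : ∀ α : Ordinal, α < omega1 → π α < omega1 := by
    intro α hα
    have hmem := hf.bij.mapsTo (haS α 0 hα)
    rw [hfa0 α hα] at hmem
    exact hmem
  have hπle : ∀ α, α < omega1 → ∀ β, β < omega1 → (π α ≤ π β ↔ α ≤ β) := by
    intro α hα β hβ
    have he1 := hf.e1 (MU.a α 0) (haS α 0 hα) (MU.a β 0) (haS β 0 hβ)
    rw [hfa0 α hα, hfa0 β hβ] at he1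
    simpa [E1, isA, idx] using he1
  have hπinj : ∀ α, α < omega1 → ∀ β, β < omega1 → π α = π β → α = β := by
    intro α hα β hβ hEq
    exact le_antisymm ((hπle α hα β hβ).mp hEq.le) ((hπle β hβ α hα).mp hEq.ge)
  -- base point
  have h0 : f (MU.a 0 (xg 0)) = MU.a (π 0) (Z 0 + xg 0) := hfA 0 hzero (xg 0)
  rw [hfx] at h0
  injection h0 with hπ0 hZ0
  have hZ0ne : Z 0 ≠ 0 := by
    intro hz
    rw [hz, zero_add] at hZ0
    have hc := congrArg (fun y : G => y 0) hZ0
    simp [xg, Finsupp.single_apply] at hc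
  have hHZ : ∀ α : Ordinal, α < omega1 → H (Z α) = Z 0 := by
    intro α hα
    have hr : R1 (fun _ => 0) (fun _ => H) (MU.a 0 0) (MU.a α 0) :=
      ⟨α, 0, 0, hα, rfl, rfl, map_zero H⟩
    have hr2 := (hf.r1 (MU.a 0 0) (haS 0 0 hzero) (MU.a α 0) (haS α 0 hα)).mpr hr
    rw [hfa0 0 hzero, hfa0 α hα] at hr2
    obtain ⟨α', y₁, y₂, _, hv, hu, hgy⟩ := hr2
    injection hv with hv1 hv2
    injection hu with hu1 hu2
    rw [← hv2, ← hu2] at hgy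
    exact hgy
  have hZne : ∀ α, α < omega1 → Z α ≠ 0 := by
    intro α hα hz
    exact hZ0ne (by rw [← hHZ α hα, hz, map_zero])
  -- find a coordinate appearing in infinitely many supports
  have hcodom : Cardinal.mk (ULift.{1} (Finset ℕ)) < Cardinal.mk (↥(Set.Iio omega1)) := by
    rw [Ordinal.mk_Iio_ordinal, omega1, Cardinal.card_ord, Cardinal.mk_uLift,
      Cardinal.mk_eq_aleph0 (Finset ℕ)]
    exact Cardinal.lift_lt.mpr Cardinal.aleph0_lt_aleph_one
  obtain ⟨s, hs⟩ := Cardinal.exists_infinite_fiber'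
    (fun a : ↥(Set.Iio omega1) => (ULift.up (Z a.1).support : ULift.{1} (Finset ℕ)))
    hcodom
  haveI := hs
  let e := Infinite.natEmbedding
    ((fun a : ↥(Set.Iio omega1) => (ULift.up (Z a.1).support : ULift.{1} (Finset ℕ))) ⁻¹' {s})
  have helt : ∀ k : ℕ, ((e k).1.1 : Ordinal) < omega1 := fun k => (e k).1.2
  have hsupp : ∀ k : ℕ, (Z (e k).1.1).support = s.down := by
    intro k
    have hmem : ULift.up (Z (e k).1.1).support = s := (e k).2
    exact congrArg ULift.down hmem
  obtain ⟨n, hn⟩ : ((Z (e 0).1.1).support).Nonempty :=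
    Finsupp.support_nonempty_iff.mpr (hZne _ (helt 0))
  have hnall : ∀ k : ℕ, n ∈ (Z (e k).1.1).support := by
    intro k; rw [hsupp k, ← hsupp 0]; exact hn
  -- a countable bound
  set γ := iSup (fun k : ℕ => ((e k).1.1 : Ordinal) + 1) with hγdef
  have hγlt : γ < omega1 := by
    apply Ordinal.iSup_lt_ord
    · rw [Cardinal.mk_nat, omega1, Cardinal.isRegular_aleph_one.cof_eq]
      exact Cardinal.aleph0_lt_aleph_one
    · intro k
      rw [Ordinal.add_one_eq_succ]
      exact (Cardinal.isSuccLimit_ord (Cardinal.aleph0_le_aleph 1)).succ_lt (helt k)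
  have hlt : ∀ k : ℕ, ((e k).1.1 : Ordinal) < γ := by
    intro k
    have h1 : ((e k).1.1 : Ordinal) < (e k).1.1 + 1 := by
      rw [Ordinal.add_one_eq_succ]; exact Order.lt_succ _
    exact h1.trans_le (Ordinal.le_iSup _ k)
  -- the constant sequence
  set η : Ordinal → Set G := fun β => if β < γ then G0 n else ∅ with hηdef
  have hokB : okB γ η := by
    refine ⟨?_, ?_, n, ?_⟩
    · intro β hβ
      simp only [hηdef, if_pos hβ]
      exact ⟨n, Or.inl rfl⟩
    · intro β hβ
      simp only [hηdef, if_neg hβ]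
    · convert Set.finite_empty
      ext β
      simp only [Set.mem_setOf_eq, Set.mem_empty_iff_false, iff_false, not_and]
      intro hβ hne
      exact hne (by simp only [hηdef, if_pos hβ])
  have hbS : MU.b γ η ∈ MUuniv omega1 := ⟨hγlt, hokB⟩
  have hbA : ¬ isA (f (MU.b γ η)) := by
    rw [hf.p1 _ hbS]; simp [isA]
  obtain ⟨γ'', η'', hb⟩ : ∃ γ'' η'', f (MU.b γ η) = MU.b γ'' η'' := by
    cases hfb : f (MU.b γ η) with
    | a β g => rw [hfb] at hbA; exact absurd trivial hbA
    | b β' η' => exact ⟨β', η', rfl⟩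
  have hbmem : MU.b γ'' η'' ∈ MUuniv omega1 := by rw [← hb]; exact hf.bij.mapsTo hbS
  have hbmem' : γ'' < omega1 ∧ okB γ'' η'' := hbmem
  obtain ⟨hγ''lt, hfam'', hpad'', m, hfin''⟩ := hbmem'
  -- transfer Rmem
  have hRin : ∀ k : ℕ, ∀ g : G, g ∈ G0 n →
      π (e k).1.1 < γ'' ∧ Z (e k).1.1 + g ∈ η'' (π (e k).1.1) := by
    intro k g hg
    have hR : Rmem (MU.b γ η) (MU.a (e k).1.1 g) :=
      ⟨γ, η, (e k).1.1, g, rfl, rfl, hlt k, by simp only [hηdef, if_pos (hlt k)]; exact hg⟩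
    have hR2 := (hf.r (MU.b γ η) hbS (MU.a (e k).1.1 g) (haS _ g (helt k))).mpr hR
    rw [hb, hfA _ (helt k) g] at hR2
    obtain ⟨β', η', α', g', h1, h2, h3, h4⟩ := hR2
    injection h1 with h1a h1b
    injection h2 with h2a h2b
    refine ⟨?_, ?_⟩
    · rw [h1a, h2a]; exact h3
    · rw [h1b, h2a, h2b]; exact h4
  have hmemT : ∀ k : ℕ, π (e k).1.1 ∈ {β : Ordinal | β < γ'' ∧ η'' β ≠ G0 m} := by
    intro k
    have h0mem : (0 : G) ∈ G0 n := (Stmt15Aux.mem_G0 n 0).mpr rfl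
    obtain ⟨hlt'', hZmem⟩ := hRin k 0 h0mem
    rw [add_zero] at hZmem
    refine ⟨hlt'', ?_⟩
    intro hEq
    by_cases hmn : m = n
    · subst hmn
      rw [hEq, Stmt15Aux.mem_G0] at hZmem
      exact (Finsupp.mem_support_iff.mp (hnall k)) hZmem
    · have hxm : xg m ∈ G0 n := (Stmt15Aux.mem_G0 n (xg m)).mpr
        (by rw [xg]; exact Finsupp.single_eq_of_ne' hmn)
      obtain ⟨-, hZm⟩ := hRin k (xg m) hxm
      rw [hEq, Stmt15Aux.mem_G0] at hZmem hZm
      rw [Finsupp.add_apply, hZmem, zero_add, xg, Finsupp.single_eq_same] at hZm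
      exact one_ne_zero hZm
  have hinj : Function.Injective (fun k : ℕ => π (e k).1.1) := by
    intro k1 k2 hEq
    have h12 : ((e k1).1.1 : Ordinal) = (e k2).1.1 :=
      hπinj _ (helt k1) _ (helt k2) hEq
    exact e.injective (Subtype.ext (Subtype.ext h12))
  exact (Set.infinite_of_injective_forall_mem hinj hmemT) hfin''
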